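/- If A is a closed ∀⁺ type of system F, then A is an input type: for every normal λ-term t, if ⊢_F t : A then ⊢_{F₀} t : A. -/

import Mathlib

/-!
Common development: pure λ-calculus in de Bruijn notation, β-reduction,
weak head reduction, types of system F (with type constants), the typing
systems F, F₀ (F without (∀e)) and the simple system S, saturated sets and
interpretations, and the notions of input / output / data types, following
Farkh-Nour, "Les types de données syntaxiques du système F".
-/

namespace FarkhNour

/-- Pure λ-terms, in de Bruijn notation. -/
inductive Trm : Type
  | var : ℕ → Trm
  | app : Trm → Trm → Trm
  | lam : Trm → Trm

/-- Lift (shift) by `d` the free variables of a term, starting at index `k`. -/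
def liftTrm (d : ℕ) : ℕ → Trm → Trm
  | k, .var n => if n < k then .var n else .var (n + d)
  | k, .app a b => .app (liftTrm d k a) (liftTrm d k b)
  | k, .lam a => .lam (liftTrm d (k + 1) a)

/-- β-substitution `t[u/k]` (the binder for `k` is consumed: variables above `k`
are decremented), as used in the β-reduction rule. -/
def substTrm : Trm → ℕ → Trm → Trm
  | .var n, k, u => if n < k then .var n else if n = k then liftTrm k 0 u else .var (n - 1)
  | .app a b, k, u => .app (substTrm a k u) (substTrm b k u)
  | .lam a, k, u => .lam (substTrm a (k + 1) u)

/-- Named-style capture-avoiding substitution `t[u/x]` of the term `u` for the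
free variable `x` of `t` : the other free variables are left unchanged. -/
def replaceVar : Trm → ℕ → Trm → Trm
  | .var n, k, u => if n = k then u else .var n
  | .app a b, k, u => .app (replaceVar a k u) (replaceVar b k u)
  | .lam a, k, u => .lam (replaceVar a (k + 1) (liftTrm 1 0 u))

/-- Lifting of a parallel substitution under a binder. -/
def liftSub (σ : ℕ → Trm) : ℕ → Trm
  | 0 => .var 0
  | n + 1 => liftTrm 1 0 (σ n)

/-- Simultaneous (parallel) capture-avoiding substitution. -/
def msubst (σ : ℕ → Trm) : Trm → Trm
  | .var n => σ n
  | .app a b => .app (msubst σ a) (msubst σ b)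
  | .lam a => .lam (msubst (liftSub σ) a)

/-- One step of β-reduction. -/
inductive BetaStep : Trm → Trm → Prop
  | beta (t u : Trm) : BetaStep (.app (.lam t) u) (substTrm t 0 u)
  | appL {t t' : Trm} (u : Trm) : BetaStep t t' → BetaStep (.app t u) (.app t' u)
  | appR (t : Trm) {u u' : Trm} : BetaStep u u' → BetaStep (.app t u) (.app t u')
  | lam {t t' : Trm} : BetaStep t t' → BetaStep (.lam t) (.lam t')

/-- Many-step β-reduction `t →β t'`. -/
def BetaRed : Trm → Trm → Prop := Relation.ReflTransGen BetaStep

/-- β-equivalence `t ≃β t'`. -/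
def BetaEq : Trm → Trm → Prop := Relation.EqvGen BetaStep

/-- A term is normal iff no β-reduction step applies to it. -/
def IsNormal (t : Trm) : Prop := ∀ u, ¬ BetaStep t u

/-- `FreeIn k t` : the variable (de Bruijn index) `k` occurs free in `t`. -/
def FreeIn : ℕ → Trm → Prop
  | k, .var n => n = k
  | k, .app a b => FreeIn k a ∨ FreeIn k b
  | k, .lam a => FreeIn (k + 1) a

/-- A closed term. -/
def TrmClosed (t : Trm) : Prop := ∀ k, ¬ FreeIn k t

/-- One step of weak head reduction. -/
inductive WHStep : Trm → Trm → Prop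
  | beta (t u : Trm) : WHStep (.app (.lam t) u) (substTrm t 0 u)
  | app {t t' : Trm} (u : Trm) : WHStep t t' → WHStep (.app t u) (.app t' u)

/-- Weak head reduction `t ≻_f t'`. -/
def WHRed : Trm → Trm → Prop := Relation.ReflTransGen WHStep

/-- Types of system F, in de Bruijn notation, with type constants
(the constant `0` is the distinguished constant `O`, the constant `1` is `⊥`). -/
inductive Ty : Type
  | var : ℕ → Ty
  | const : ℕ → Ty
  | arr : Ty → Ty → Ty
  | all : Ty → Ty

/-- The distinguished type constant `O`. -/
def tyO : Ty := .const 0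

/-- The distinguished type constant `⊥`. -/
def tyBot : Ty := .const 1

/-- Lift (shift) by `d` the free type variables, starting at index `k`. -/
def liftTy (d : ℕ) : ℕ → Ty → Ty
  | k, .var n => if n < k then .var n else .var (n + d)
  | _, .const c => .const c
  | k, .arr a b => .arr (liftTy d k a) (liftTy d k b)
  | k, .all a => .all (liftTy d (k + 1) a)

/-- Capture-avoiding type substitution `A[G/k]`. -/
def substTy : Ty → ℕ → Ty → Ty
  | .var n, k, G => if n < k then .var n else if n = k then liftTy k 0 G else .var (n - 1)
  | .const c, _, _ => .const c
  | .arr a b, k, G => .arr (substTy a k G) (substTy b k G)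
  | .all a, k, G => .all (substTy a (k + 1) G)

/-- `TyFreeIn k A` : the type variable `k` occurs free in `A`. -/
def TyFreeIn : ℕ → Ty → Prop
  | k, .var n => n = k
  | _, .const _ => False
  | k, .arr a b => TyFreeIn k a ∨ TyFreeIn k b
  | k, .all a => TyFreeIn (k + 1) a

/-- Boolean version of `TyFreeIn`. -/
def tyFreeInB : ℕ → Ty → Bool
  | k, .var n => n == k
  | _, .const _ => false
  | k, .arr a b => tyFreeInB k a || tyFreeInB k b
  | k, .all a => tyFreeInB (k + 1) a

/-- A closed type. -/
def TyClosed (A : Ty) : Prop := ∀ k, ¬ TyFreeIn k A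

/-- `ContainsConst c A` : the type constant `c` occurs in `A`. -/
def ContainsConst : ℕ → Ty → Prop
  | _, .var _ => False
  | c, .const c' => c' = c
  | c, .arr a b => ContainsConst c a ∨ ContainsConst c b
  | c, .all a => ContainsConst c a

/-- The typing judgment `Γ ⊢_F t : A` of system F, with rules
(ax), (→i), (→e), (∀i), (∀e). -/
inductive TypF : List Ty → Trm → Ty → Prop
  | var (Γ : List Ty) (n : ℕ) (A : Ty) : Γ[n]? = some A → TypF Γ (.var n) A
  | abs {Γ : List Ty} {t : Trm} {B C : Ty} :
      TypF (B :: Γ) t C → TypF Γ (.lam t) (.arr B C)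
  | app {Γ : List Ty} {u v : Trm} {B C : Ty} :
      TypF Γ u (.arr B C) → TypF Γ v B → TypF Γ (.app u v) C
  | allI {Γ : List Ty} {t : Trm} {A : Ty} :
      TypF (Γ.map (liftTy 1 0)) t A → TypF Γ t (.all A)
  | allE {Γ : List Ty} {t : Trm} {A : Ty} (G : Ty) :
      TypF Γ t (.all A) → TypF Γ t (substTy A 0 G)

/-- The typing judgment `Γ ⊢_{F₀} t : A` of system F₀, i.e. system F
without the rule (∀e). -/
inductive TypF0 : List Ty → Trm → Ty → Prop
  | var (Γ : List Ty) (n : ℕ) (A : Ty) : Γ[n]? = some A → TypF0 Γ (.var n) A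
  | abs {Γ : List Ty} {t : Trm} {B C : Ty} :
      TypF0 (B :: Γ) t C → TypF0 Γ (.lam t) (.arr B C)
  | app {Γ : List Ty} {u v : Trm} {B C : Ty} :
      TypF0 Γ u (.arr B C) → TypF0 Γ v B → TypF0 Γ (.app u v) C
  | allI {Γ : List Ty} {t : Trm} {A : Ty} :
      TypF0 (Γ.map (liftTy 1 0)) t A → TypF0 Γ t (.all A)

/-- The typing judgment `Γ ⊢_S t : A` of the simple type system S,
with rules (ax), (→i), (→e) only. -/
inductive TypS : List Ty → Trm → Ty → Prop
  | var (Γ : List Ty) (n : ℕ) (A : Ty) : Γ[n]? = some A → TypS Γ (.var n) A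
  | abs {Γ : List Ty} {t : Trm} {B C : Ty} :
      TypS (B :: Γ) t C → TypS Γ (.lam t) (.arr B C)
  | app {Γ : List Ty} {u v : Trm} {B C : Ty} :
      TypS Γ u (.arr B C) → TypS Γ v B → TypS Γ (.app u v) C

/-- Quantifier-free types (types of the simple type system S). -/
def QFree : Ty → Prop
  | .var _ => True
  | .const _ => True
  | .arr a b => QFree a ∧ QFree b
  | .all _ => False

/-- An input type : a closed type all of whose normal inhabitants are
typable in system F₀. -/
def IsInputType (E : Ty) : Prop :=
  TyClosed E ∧ ∀ t : Trm, IsNormal t → TypF [] t E → TypF0 [] t E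

/-- An output type : a closed type `S` not containing the constant `O` such
that for every normal term `t`, if `α : O ⊢_F t : S` then `α ∉ Fv(t)`. -/
def IsOutputType (S : Ty) : Prop :=
  TyClosed S ∧ ¬ ContainsConst 0 S ∧
    ∀ t : Trm, IsNormal t → TypF [tyO] t S → ¬ FreeIn 0 t

/-- A syntactical data type : a closed type which is both input and output. -/
def IsSyntacticalDataType (D : Ty) : Prop := IsInputType D ∧ IsOutputType D

mutual
  /-- The ∀⁺ types (positive quantifiers). -/
  inductive PosTy : Ty → Prop
    | var (n : ℕ) : PosTy (.var n)
    | arr {B A : Ty} : NegTy B → PosTy A → PosTy (.arr B A)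
    | all {A : Ty} : PosTy A → TyFreeIn 0 A → PosTy (.all A)
  /-- The ∀⁻ types (negative quantifiers). -/
  inductive NegTy : Ty → Prop
    | var (n : ℕ) : NegTy (.var n)
    | arr {B A : Ty} : PosTy B → NegTy A → NegTy (.arr B A)
end

/-- `EndsInConst c A` : the type `A` ends in the type constant `c`. -/
inductive EndsInConst : ℕ → Ty → Prop
  | base (c : ℕ) : EndsInConst c (.const c)
  | arr {c : ℕ} {A : Ty} (B : Ty) : EndsInConst c A → EndsInConst c (.arr B A)
  | all {c : ℕ} {A : Ty} : EndsInConst c A → EndsInConst c (.all A)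

/-- `EndsInVar k A` : the type `A` ends in the type variable `k`
(crossing a quantifier ∀X with X ≠ the variable is allowed). -/
inductive EndsInVar : ℕ → Ty → Prop
  | base (k : ℕ) : EndsInVar k (.var k)
  | arr {k : ℕ} {A : Ty} (B : Ty) : EndsInVar k A → EndsInVar k (.arr B A)
  | all {k : ℕ} {A : Ty} : EndsInVar (k + 1) A → EndsInVar k (.all A)

/-- The side condition of the restricted rule (∀e)_F : the body `A` of `∀X A`
(the variable X having index `k`) is of the form
`∀X₀(A₁ → ∀X₁(A₂ → … → ∀X_{n-1}(A_n → ∀X_n Y)…))` with `Y = X` or one of the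
`A_i` ending in `X`. -/
inductive FFForm : ℕ → Ty → Prop
  | base (k : ℕ) : FFForm k (.var k)
  | all {k : ℕ} {A : Ty} : FFForm (k + 1) A → FFForm k (.all A)
  | arrTail {k : ℕ} {C : Ty} (B : Ty) : FFForm k C → FFForm k (.arr B C)
  | arrHit {k : ℕ} {B C : Ty} : EndsInVar k B → (∃ j, EndsInVar j C) →
      FFForm k (.arr B C)

/-- The typing judgment of system F_F : system F where the rule (∀e) is
replaced by the restricted rule (∀e)_F. -/
inductive TypFF : List Ty → Trm → Ty → Prop
  | var (Γ : List Ty) (n : ℕ) (A : Ty) : Γ[n]? = some A → TypFF Γ (.var n) A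
  | abs {Γ : List Ty} {t : Trm} {B C : Ty} :
      TypFF (B :: Γ) t C → TypFF Γ (.lam t) (.arr B C)
  | app {Γ : List Ty} {u v : Trm} {B C : Ty} :
      TypFF Γ u (.arr B C) → TypFF Γ v B → TypFF Γ (.app u v) C
  | allI {Γ : List Ty} {t : Trm} {A : Ty} :
      TypFF (Γ.map (liftTy 1 0)) t A → TypFF Γ t (.all A)
  | allE {Γ : List Ty} {t : Trm} {A : Ty} (G : Ty) :
      FFForm 0 A → TypFF Γ t (.all A) → TypFF Γ t (substTy A 0 G)

/-- An output type of system F_F. -/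
def IsOutputTypeFF (S : Ty) : Prop :=
  TyClosed S ∧ ¬ ContainsConst 0 S ∧
    ∀ t : Trm, IsNormal t → TypFF [tyO] t S → ¬ FreeIn 0 t

/-- Saturated sets of λ-terms. -/
def Saturated (G : Set Trm) : Prop := ∀ t u : Trm, WHRed t u → u ∈ G → t ∈ G

/-- `G → G'` on sets of λ-terms. -/
def SetArr (G G' : Set Trm) : Set Trm := {u : Trm | ∀ t ∈ G, Trm.app u t ∈ G'}

/-- Extension of an interpretation by a set for the (de Bruijn) variable 0. -/
def consEnv (G : Set Trm) (I : ℕ → Set Trm) : ℕ → Set Trm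
  | 0 => G
  | n + 1 => I n

/-- The value `|A|_I` of a type in an interpretation (`C` interprets the
type constants, `I` the type variables). -/
def TyVal (C : ℕ → Set Trm) : Ty → (ℕ → Set Trm) → Set Trm
  | .var n, I => I n
  | .const c, _ => C c
  | .arr a b, I => SetArr (TyVal C a I) (TyVal C b I)
  | .all a, I => {t : Trm | ∀ G : Set Trm, Saturated G → t ∈ TyVal C a (consEnv G I)}

/-- `|A|` : the intersection of the values of `A` under all interpretations
by saturated sets. -/
def TyGlobal (A : Ty) : Set Trm :=
  {t : Trm | ∀ C I : ℕ → Set Trm, (∀ c, Saturated (C c)) → (∀ n, Saturated (I n)) →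
    t ∈ TyVal C A I}

/-- A data type in Krivine's sense : a closed type `A` with `|A| ≠ ∅` such that
every term of `|A|` β-reduces to a closed term. -/
def IsDataType (A : Ty) : Prop :=
  TyClosed A ∧ TyGlobal A ≠ ∅ ∧
    ∀ t ∈ TyGlobal A, ∃ t' : Trm, BetaRed t t' ∧ TrmClosed t'

/-- The product type `A ∧ B = ∀X((A → (B → X)) → X)` (X fresh). -/
def tyAnd (A B : Ty) : Ty :=
  .all (.arr (.arr (liftTy 1 0 A) (.arr (liftTy 1 0 B) (.var 0))) (.var 0))

/-- The disjoint sum type `A ∨ B = ∀X((A → X) → ((B → X) → X))` (X fresh). -/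
def tyOr (A B : Ty) : Ty :=
  .all (.arr (.arr (liftTy 1 0 A) (.var 0))
    (.arr (.arr (liftTy 1 0 B) (.var 0)) (.var 0)))

/-- The type `LA = ∀X(X → ((A → (X → X)) → X))` of lists of objects of `A`. -/
def tyList (A : Ty) : Ty :=
  .all (.arr (.var 0)
    (.arr (.arr (liftTy 1 0 A) (.arr (.var 0) (.var 0))) (.var 0)))

/-- Negation `¬A = A → ⊥`. -/
def tyNeg (A : Ty) : Ty := .arr A tyBot

/-- The Gödel translation `A*` : every atomic subformula `R` is replaced
by `¬R`. -/
def godel : Ty → Ty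
  | .var n => .arr (.var n) tyBot
  | .const c => .arr (.const c) tyBot
  | .arr a b => .arr (godel a) (godel b)
  | .all a => .all (godel a)

/-- `T` is a storage operator for the pair of types `(E, S)`. -/
def IsStorageOpPair (T : Trm) (E S : Ty) : Prop :=
  TrmClosed T ∧
    ∀ t : Trm, TypF [] t E →
      ∃ τ τ' : Trm, BetaEq τ τ' ∧ TypF [] τ' S ∧
        ∀ θ : Trm, BetaEq θ t →
          ∀ f : ℕ, ¬ FreeIn f θ → ¬ FreeIn f τ →
            ∃ σ : ℕ → Trm,
              WHRed (.app (.app T θ) (.var f)) (.app (.var f) (msubst σ τ))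

/-- `T` is a storage operator for the type `D`. -/
def IsStorageOp (T : Trm) (D : Ty) : Prop := IsStorageOpPair T D D

/-- The term `λx₁…λxₙ.α` (n-fold abstraction over the free variable `α`). -/
def nlam (n a : ℕ) : Trm := Trm.lam^[n] (Trm.var (a + n))

/-- The term `p_n = λx₁…λxₙλx.x`. -/
def pTrm (n : ℕ) : Trm := Trm.lam^[n] (Trm.lam (Trm.var 0))

/-- `B₁ → … → B_n → A`. -/
def mkArr (Bs : List Ty) (A : Ty) : Ty := Bs.foldr Ty.arr A

/-- The length `Lg(E)` of a type : the number of occurrences of `→` in it. -/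
def Lg : Ty → ℕ
  | .var _ => 0
  | .const _ => 0
  | .arr a b => Lg a + Lg b + 1
  | .all a => Lg a

/-- `SubtypeOf A E` : `A` is a subtype (subformula) of `E`. -/
inductive SubtypeOf : Ty → Ty → Prop
  | refl (A : Ty) : SubtypeOf A A
  | arrL {A B C : Ty} : SubtypeOf A B → SubtypeOf A (.arr B C)
  | arrR {A B C : Ty} : SubtypeOf A C → SubtypeOf A (.arr B C)
  | all {A B : Ty} : SubtypeOf A B → SubtypeOf A (.all B)

/-- `InAppPos k t` : the variable `k` occurs in application (function)
position in `t`, i.e. some subterm of `t` is of the form `(k)u`. -/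
def InAppPos : ℕ → Trm → Prop
  | _, .var _ => False
  | k, .app u v => u = .var k ∨ InAppPos k u ∨ InAppPos k v
  | k, .lam u => InAppPos (k + 1) u

/-- The simple translation `A^s` : `X^s = X`, `(B → C)^s = B^s → C^s`,
`(∀X B)^s = B^s` (the variables freed by erasing the quantifiers are collapsed
onto the type variable `0`). `d` counts the erased quantifiers. -/
def eraseTyAux : ℕ → Ty → Ty
  | d, .var n => .var (n - d)
  | _, .const c => .const c
  | d, .arr a b => .arr (eraseTyAux d a) (eraseTyAux d b)
  | d, .all a => eraseTyAux (d + 1) a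

/-- The simple translation `A^s`. -/
def eraseTy : Ty → Ty := eraseTyAux 0

/-- The identity term `λx.x`. -/
def idTrm : Trm := .lam (.var 0)

/-- The boolean `𝟙 = λxλy.x`. -/
def oneTrm : Trm := .lam (.lam (.var 1))

/-- The pair of λ-terms `(T_F, T'_F)` associated with a type `F` (the
distinguished variable `X` having de Bruijn index `k`; the term variable `α`
is the free term variable `0`):
`T_F = T'_F = λx.x` if `X ∉ Fv(F)`;
`T_X = λxλβλg.(g)xα`, `T'_X = λx.(x)α𝟙`;
`T_{C→D} = λxλy.(T_D)(x)(T'_C)y`, `T'_{C→D} = λxλy.(T'_D)(x)(T_C)y`;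
`T_{∀Y B} = λx.(T_B)x`, `T'_{∀Y B} = λx.(T'_B)x`. -/
def TTpair : ℕ → Ty → Trm × Trm
  | k, .var n =>
      if n = k then
        (.lam (.lam (.lam (.app (.app (.var 0) (.var 2)) (.var 3)))),
         .lam (.app (.app (.var 0) (.var 1)) oneTrm))
      else (idTrm, idTrm)
  | _, .const _ => (idTrm, idTrm)
  | k, .arr C D =>
      if tyFreeInB k (.arr C D) then
        (.lam (.lam (.app (liftTrm 2 0 (TTpair k D).1)
            (.app (.var 1) (.app (liftTrm 2 0 (TTpair k C).2) (.var 0))))),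
         .lam (.lam (.app (liftTrm 2 0 (TTpair k D).2)
            (.app (.var 1) (.app (liftTrm 2 0 (TTpair k C).1) (.var 0))))))
      else (idTrm, idTrm)
  | k, .all B =>
      if tyFreeInB k (.all B) then
        (.lam (.app (liftTrm 1 0 (TTpair (k + 1) B).1) (.var 0)),
         .lam (.app (liftTrm 1 0 (TTpair (k + 1) B).2) (.var 0)))
      else (idTrm, idTrm)



/-! ### de Bruijn lemmas for types -/

lemma liftTy_zero (A : Ty) (k : ℕ) : liftTy 0 k A = A := by
  induction A generalizing k with
  | var n => simp [liftTy]
  | const c => rfl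
  | arr a b iha ihb => simp [liftTy, iha, ihb]
  | all a ih => simp [liftTy, ih]

lemma liftTy_liftTy (A : Ty) (d d' k m : ℕ) (h1 : k ≤ m) (h2 : m ≤ k + d') :
    liftTy d m (liftTy d' k A) = liftTy (d + d') k A := by
  induction A generalizing k m with
  | var n =>
    by_cases h3 : n < k
    · simp [liftTy, h3, lt_of_lt_of_le h3 h1]
    · have h4 : ¬ n + d' < m := by omega
      simp only [liftTy, if_neg h3, if_neg h4, Ty.var.injEq]
      omega
  | const c => rfl
  | arr a b iha ihb => simp [liftTy, iha _ _ h1 h2, ihb _ _ h1 h2]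
  | all a ih =>
    simp only [liftTy, Ty.all.injEq]
    exact ih (k+1) (m+1) (by omega) (by omega)

lemma substTy_liftTy (A : Ty) (d k m : ℕ) (G : Ty) (h1 : k ≤ m) (h2 : m < k + d) :
    substTy (liftTy d k A) m G = liftTy (d - 1) k A := by
  induction A generalizing k m with
  | var n =>
    by_cases h3 : n < k
    · simp [liftTy, substTy, h3, lt_of_lt_of_le h3 h1]
    · have h4 : ¬ n + d < m := by omega
      have h5 : ¬ n + d = m := by omega
      simp only [liftTy, substTy, if_neg h3, if_neg h4, if_neg h5, Ty.var.injEq]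
      omega
  | const c => rfl
  | arr a b iha ihb => simp [liftTy, substTy, iha _ _ h1 h2, ihb _ _ h1 h2]
  | all a ih =>
    simp only [liftTy, substTy, Ty.all.injEq]
    exact ih (k+1) (m+1) (by omega) (by omega)

lemma liftTy_comm (A : Ty) (d d' j k : ℕ) (h : j ≤ k) :
    liftTy d j (liftTy d' k A) = liftTy d' (k + d) (liftTy d j A) := by
  induction A generalizing j k with
  | var n =>
    rcases Nat.lt_or_ge n j with h1 | h1
    · simp [liftTy, h1, lt_of_lt_of_le h1 h, (by omega : n < k + d)]
    · rcases Nat.lt_or_ge n k with h2 | h2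
      · have : ¬ n < j := by omega
        simp only [liftTy, if_pos h2, if_neg this, if_pos (by omega : n + d < k + d)]
      · have h3 : ¬ n + d' < j := by omega
        have h4 : ¬ n < j := by omega
        simp only [liftTy, if_neg (by omega : ¬ n < k), if_neg h3, if_neg h4,
          if_neg (by omega : ¬ n + d < k + d), Ty.var.injEq]
        omega
  | const c => rfl
  | arr a b iha ihb => simp [liftTy, iha _ _ h, ihb _ _ h]
  | all a ih =>
    simp only [liftTy, Ty.all.injEq]
    have := ih (j+1) (k+1) (by omega)
    rwa [show k + 1 + d = k + d + 1 from by omega] at this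

lemma substTy_liftTy_comm (A : Ty) (d c k : ℕ) (G : Ty) (h : c ≤ k) :
    substTy (liftTy d c A) (d + k) G = liftTy d c (substTy A k G) := by
  induction A generalizing c k with
  | var n =>
    rcases Nat.lt_or_ge n c with h1 | h1
    · simp [liftTy, substTy, h1, (by omega : n < k), (by omega : n < d + k)]
    · rcases Nat.lt_or_ge n k with h2 | h2
      · have : ¬ n < c := by omega
        simp only [substTy, liftTy, if_neg this, if_pos (by omega : n + d < d + k),
          if_pos h2, if_neg this]
      · rcases Nat.eq_or_lt_of_le h2 with h3 | h3
        · subst h3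
          simp only [substTy, liftTy, if_neg (by omega : ¬ k < c),
            if_neg (by omega : ¬ k + d < d + k),
            if_pos (by omega : k + d = d + k), if_neg (lt_irrefl k), if_pos rfl]
          exact (liftTy_liftTy G d k 0 c (by omega) (by omega)).symm
        · have h4 : ¬ n < k := by omega
          have h5 : ¬ n = k := by omega
          have h6 : ¬ n - 1 < c := by omega
          simp only [substTy, liftTy, if_neg (by omega : ¬ n < c),
            if_neg (by omega : ¬ n + d < d + k), if_neg (by omega : ¬ n + d = d + k),
            if_neg h4, if_neg h5, if_neg h6, Ty.var.injEq]
          omega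
  | const c' => rfl
  | arr a b iha ihb => simp [liftTy, substTy, iha _ _ h, ihb _ _ h]
  | all a ih =>
    simp only [liftTy, substTy, Ty.all.injEq]
    have := ih (c+1) (k+1) (by omega)
    rwa [show d + k + 1 = d + (k + 1) from by omega]

lemma substTy_substTy (A : Ty) (j k : ℕ) (G' G : Ty) :
    substTy (substTy A j G') (j + k) G
      = substTy (substTy A (j + k + 1) G) j (substTy G' k G) := by
  induction A generalizing j with
  | var n =>
    rcases Nat.lt_or_ge n j with h1 | h1
    · simp [substTy, h1, (by omega : n < j + k), (by omega : n < j + k + 1)]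
    · rcases Nat.eq_or_lt_of_le h1 with h2 | h2
      · subst h2
        simp only [substTy, if_neg (lt_irrefl j), if_pos rfl,
          if_pos (by omega : j < j + k + 1)]
        exact substTy_liftTy_comm G' j 0 k G (by omega)
      · rcases Nat.lt_or_ge (n-1) (j+k) with h3 | h3
        · have : ¬ n = j := by omega
          simp only [substTy, if_neg (by omega : ¬ n < j), if_neg this, if_pos h3,
            if_pos (by omega : n < j + k + 1), if_neg (by omega : ¬ n < j), if_neg this]
        · rcases Nat.eq_or_lt_of_le h3 with h4 | h4
          · have hn : n = j + k + 1 := by omega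
            subst hn
            simp only [substTy, if_neg (by omega : ¬ j + k + 1 < j),
              if_neg (by omega : ¬ j + k + 1 = j), if_neg (by omega : ¬ j + k + 1 - 1 < j + k),
              if_pos (by omega : j + k + 1 - 1 = j + k),
              if_neg (by omega : ¬ j + k + 1 < j + k + 1), if_pos rfl]
            exact (substTy_liftTy G (j+k+1) 0 j (substTy G' k G) (by omega) (by omega)).symm
          · simp only [substTy, if_neg (by omega : ¬ n < j), if_neg (by omega : ¬ n = j),
              if_neg (by omega : ¬ n - 1 < j + k), if_neg (by omega : ¬ n - 1 = j + k),
              if_neg (by omega : ¬ n < j + k + 1), if_neg (by omega : ¬ n = j + k + 1),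
              if_neg (by omega : ¬ n - 1 < j), if_neg (by omega : ¬ n - 1 = j)]
  | const c => rfl
  | arr a b iha ihb => simp [substTy, iha, ihb]
  | all a ih =>
    simp only [substTy, Ty.all.injEq]
    have := ih (j+1)
    rwa [show j + 1 + k = j + k + 1 from by omega] at this

lemma not_tyFreeIn_lift (A : Ty) (d j m : ℕ) (h1 : j ≤ m) (h2 : m < j + d) :
    ¬ TyFreeIn m (liftTy d j A) := by
  induction A generalizing j m with
  | var n =>
    by_cases h3 : n < j <;> simp [liftTy, TyFreeIn, h3] <;> omega
  | const c => simp [liftTy, TyFreeIn]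
  | arr a b iha ihb =>
    simp only [liftTy, TyFreeIn, not_or]
    exact ⟨iha _ _ h1 h2, ihb _ _ h1 h2⟩
  | all a ih =>
    simp only [liftTy, TyFreeIn]
    exact ih (j+1) (m+1) (by omega) (by omega)

lemma tyFreeIn_of_lift (A : Ty) (d j m : ℕ) (h : m < j) :
    TyFreeIn m (liftTy d j A) → TyFreeIn m A := by
  induction A generalizing j m with
  | var n =>
    by_cases h3 : n < j <;> simp [liftTy, TyFreeIn, h3] <;> omega
  | const c => simp [liftTy, TyFreeIn]
  | arr a b iha ihb =>
    simp only [liftTy, TyFreeIn]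
    rintro (h' | h')
    · exact Or.inl (iha _ _ h h')
    · exact Or.inr (ihb _ _ h h')
  | all a ih =>
    simp only [liftTy, TyFreeIn]
    exact ih (j+1) (m+1) (by omega)

lemma tyFreeIn_lift_low (A : Ty) (d j m : ℕ) (h : m < j) :
    TyFreeIn m A → TyFreeIn m (liftTy d j A) := by
  induction A generalizing j m with
  | var n =>
    by_cases h3 : n < j <;> simp [liftTy, TyFreeIn, h3] <;> omega
  | const c => simp [liftTy, TyFreeIn]
  | arr a b iha ihb =>
    simp only [liftTy, TyFreeIn]
    rintro (h' | h')
    · exact Or.inl (iha _ _ h h')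
    · exact Or.inr (ihb _ _ h h')
  | all a ih =>
    simp only [liftTy, TyFreeIn]
    exact ih (j+1) (m+1) (by omega)

lemma tyFreeIn_iterate (k m : ℕ) (A : Ty) :
    TyFreeIn m (Ty.all^[k] A) → TyFreeIn (m + k) A := by
  induction k generalizing m with
  | zero => exact fun h => h
  | succ k ih =>
    rw [Function.iterate_succ_apply']
    intro h
    have := ih (m+1) h
    rwa [show m + 1 + k = m + (k + 1) from by omega] at this

lemma substTy_iterate_all (m : ℕ) (X : Ty) (j : ℕ) (G : Ty) :
    substTy (Ty.all^[m] X) j G = Ty.all^[m] (substTy X (j + m) G) := by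
  induction m generalizing j with
  | zero => rfl
  | succ m ih =>
    rw [Function.iterate_succ_apply', Function.iterate_succ_apply']
    show Ty.all (substTy (Ty.all^[m] X) (j+1) G) = _
    rw [ih (j+1), show j + 1 + m = j + (m + 1) from by omega]


/-! ### Positive / negative types under lifting -/

lemma posTy_negTy_lift (A : Ty) : ∀ d m,
    (PosTy A → PosTy (liftTy d m A)) ∧ (NegTy A → NegTy (liftTy d m A)) := by
  induction A with
  | var n =>
    intro d m
    constructor <;> intro _ <;> simp only [liftTy] <;> split <;>
      first | exact PosTy.var _ | exact NegTy.var _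
  | const c =>
    intro d m
    refine ⟨fun h => ?_, fun h => ?_⟩ <;> simp only [liftTy] at h ⊢ <;> exact h
  | arr a b iha ihb =>
    intro d m
    refine ⟨fun h => ?_, fun h => ?_⟩ <;> simp only [liftTy]
    · cases h with
      | arr hB hA => exact PosTy.arr ((iha d m).2 hB) ((ihb d m).1 hA)
    · cases h with
      | arr hB hA => exact NegTy.arr ((iha d m).1 hB) ((ihb d m).2 hA)
  | all a ih =>
    intro d m
    refine ⟨fun h => ?_, fun h => ?_⟩ <;> simp only [liftTy]
    · cases h with
      | all hA hfree =>
        exact PosTy.all ((ih d (m+1)).1 hA) (tyFreeIn_lift_low a d (m+1) 0 (by omega) hfree)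
    · exact nomatch h

lemma posTy_negTy_unlift (A : Ty) : ∀ d m,
    (PosTy (liftTy d m A) → PosTy A) ∧ (NegTy (liftTy d m A) → NegTy A) := by
  induction A with
  | var n =>
    intro d m
    constructor <;> intro _ <;> first | exact PosTy.var _ | exact NegTy.var _
  | const c =>
    intro d m
    refine ⟨fun h => ?_, fun h => ?_⟩ <;> simp only [liftTy] at h <;> exact h
  | arr a b iha ihb =>
    intro d m
    refine ⟨fun h => ?_, fun h => ?_⟩ <;> simp only [liftTy] at h
    · cases h with
      | arr hB hA => exact PosTy.arr ((iha d m).2 hB) ((ihb d m).1 hA)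
    · cases h with
      | arr hB hA => exact NegTy.arr ((iha d m).1 hB) ((ihb d m).2 hA)
  | all a ih =>
    intro d m
    refine ⟨fun h => ?_, fun h => ?_⟩ <;> simp only [liftTy] at h
    · cases h with
      | all hA hfree =>
        exact PosTy.all ((ih d (m+1)).1 hA)
          (tyFreeIn_of_lift a d (m+1) 0 (by omega) hfree)
    · exact nomatch h

lemma negTy_not_all {B : Ty} (h : NegTy (.all B)) : False := nomatch h

/-! ### Tail (iterated codomain) relation -/

/-- `Tail C T` : `C` is an iterated codomain of `T`. -/
inductive Tail : Ty → Ty → Prop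
  | refl (T : Ty) : Tail T T
  | arrR {C B A : Ty} : Tail C A → Tail C (.arr B A)

lemma tail_trans {X Y Z : Ty} (h1 : Tail X Y) (h2 : Tail Y Z) : Tail X Z := by
  induction h2 with
  | refl => exact h1
  | arrR _ ih => exact Tail.arrR ih

lemma tail_lift {C T : Ty} {m : ℕ} (h : Tail C (liftTy 1 m T)) :
    ∃ C₀, C = liftTy 1 m C₀ ∧ Tail C₀ T := by
  induction T generalizing C with
  | var n =>
    simp only [liftTy] at h
    by_cases hm : n < m
    · rw [if_pos hm] at h
      cases h
      exact ⟨.var n, by simp [liftTy, hm], Tail.refl _⟩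
    · rw [if_neg hm] at h
      cases h
      exact ⟨.var n, by simp [liftTy, hm], Tail.refl _⟩
  | const c =>
    cases h
    exact ⟨.const c, rfl, Tail.refl _⟩
  | arr a b iha ihb =>
    simp only [liftTy] at h
    cases h with
    | refl => exact ⟨.arr a b, rfl, Tail.refl _⟩
    | arrR h' =>
      obtain ⟨C₀, rfl, h₀⟩ := ihb h'
      exact ⟨C₀, rfl, Tail.arrR h₀⟩
  | all a ih =>
    simp only [liftTy] at h
    cases h
    exact ⟨.all a, by simp [liftTy], Tail.refl _⟩

/-! ### Substitution lemmas for the typing systems -/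

lemma typF_subst {Γ : List Ty} {t : Trm} {A : Ty} (h : TypF Γ t A) (k : ℕ) (G : Ty) :
    TypF (Γ.map (fun T => substTy T k G)) t (substTy A k G) := by
  induction h generalizing k G with
  | var Γ n A hA =>
    refine TypF.var _ _ _ ?_
    rw [List.getElem?_map, hA, Option.map_some]
  | abs h ih => exact TypF.abs (ih k G)
  | app hu hv ihu ihv => exact TypF.app (ihu k G) (ihv k G)
  | allI h ih =>
    refine TypF.allI ?_
    have hctx : (‹List Ty›.map (liftTy 1 0)).map (fun T => substTy T (k+1) G)
        = (‹List Ty›.map (fun T => substTy T k G)).map (liftTy 1 0) := by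
      simp only [List.map_map]
      refine List.map_congr_left fun T _ => ?_
      show substTy (liftTy 1 0 T) (k + 1) G = liftTy 1 0 (substTy T k G)
      have := substTy_liftTy_comm T 1 0 k G (by omega)
      rwa [show 1 + k = k + 1 from by omega] at this
    have := ih (k+1) G
    rw [hctx] at this
    exact this
  | allE G' h ih =>
    rename_i Γ' t' A'
    have h6 := substTy_substTy A' 0 k G' G
    simp only [Nat.zero_add] at h6
    rw [h6]
    exact TypF.allE (substTy G' k G) (ih k G)

lemma typF0_subst {Γ : List Ty} {t : Trm} {A : Ty} (h : TypF0 Γ t A) (k : ℕ) (G : Ty) :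
    TypF0 (Γ.map (fun T => substTy T k G)) t (substTy A k G) := by
  induction h generalizing k G with
  | var Γ n A hA =>
    refine TypF0.var _ _ _ ?_
    rw [List.getElem?_map, hA, Option.map_some]
  | abs h ih => exact TypF0.abs (ih k G)
  | app hu hv ihu ihv => exact TypF0.app (ihu k G) (ihv k G)
  | allI h ih =>
    refine TypF0.allI ?_
    have hctx : (‹List Ty›.map (liftTy 1 0)).map (fun T => substTy T (k+1) G)
        = (‹List Ty›.map (fun T => substTy T k G)).map (liftTy 1 0) := by
      simp only [List.map_map]
      refine List.map_congr_left fun T _ => ?_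
      show substTy (liftTy 1 0 T) (k + 1) G = liftTy 1 0 (substTy T k G)
      have := substTy_liftTy_comm T 1 0 k G (by omega)
      rwa [show 1 + k = k + 1 from by omega] at this
    have := ih (k+1) G
    rw [hctx] at this
    exact this

/-- Unlifting a TypF0 judgment whose context and type are lifted. -/
lemma typF0_unlift {Γ : List Ty} {t : Trm} {C : Ty}
    (h : TypF0 (Γ.map (liftTy 1 0)) t (liftTy 1 0 C)) : TypF0 Γ t C := by
  have := typF0_subst h 0 (Ty.const 0)
  rw [List.map_map] at this
  have hctx : Γ.map ((fun T => substTy T 0 (Ty.const 0)) ∘ liftTy 1 0) = Γ := by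
    have : ∀ T ∈ Γ, ((fun T => substTy T 0 (Ty.const 0)) ∘ liftTy 1 0) T = id T := by
      intro T _
      show substTy (liftTy 1 0 T) 0 (Ty.const 0) = T
      rw [substTy_liftTy T 1 0 0 (Ty.const 0) (by omega) (by omega), liftTy_zero]
    rw [List.map_congr_left this, List.map_id]
  rw [hctx, substTy_liftTy C 1 0 0 (Ty.const 0) (by omega) (by omega), liftTy_zero] at this
  exact this


/-! ### Chains of (∀i)/(∀e) over a structural base -/

/-- Contexts of ∀⁻ types. -/
def CtxNeg (Γ : List Ty) : Prop := ∀ T ∈ Γ, NegTy T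

lemma ctxNeg_lift {Γ : List Ty} (h : CtxNeg Γ) : CtxNeg (Γ.map (liftTy 1 0)) := by
  intro T hT
  obtain ⟨T₀, hT₀, rfl⟩ := List.mem_map.1 hT
  exact (posTy_negTy_lift T₀ 1 0).2 (h T₀ hT₀)

/-- Chains of (∀i) and (∀e) over a base predicate. -/
inductive Up (P : List Ty → Ty → Prop) : List Ty → Ty → Prop
  | base {Γ A} : P Γ A → Up P Γ A
  | allI {Γ B} : Up P (Γ.map (liftTy 1 0)) B → Up P Γ (.all B)
  | allE {Γ B} (G : Ty) : Up P Γ (.all B) → Up P Γ (substTy B 0 G)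

/-- Chains of (∀i) only. -/
inductive Up0 (P : List Ty → Ty → Prop) : List Ty → Ty → Prop
  | base {Γ A} : P Γ A → Up0 P Γ A
  | allI {Γ B} : Up0 P (Γ.map (liftTy 1 0)) B → Up0 P Γ (.all B)

/-- The structural base of a typing of a term. -/
def BaseP : Trm → List Ty → Ty → Prop
  | .var n => fun Δ A => Δ[n]? = some A
  | .app u v => fun Δ A => ∃ B, TypF Δ u (.arr B A) ∧ TypF Δ v B
  | .lam u => fun Δ A => ∃ B C, A = .arr B C ∧ TypF (B :: Δ) u C

/-- Inversion of system-F typings into a base + (∀i)/(∀e) chain. -/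
lemma typF_up {Γ : List Ty} {t : Trm} {A : Ty} (h : TypF Γ t A) : Up (BaseP t) Γ A := by
  induction h with
  | var Γ n A hA => exact Up.base hA
  | abs h _ => exact Up.base ⟨_, _, rfl, h⟩
  | app hu hv _ _ => exact Up.base ⟨_, hu, hv⟩
  | allI _ ih => exact Up.allI ih
  | allE G _ ih => exact Up.allE G ih

lemma up0_subst {P : List Ty → Ty → Prop}
    (hP : ∀ Δ k A G, P (Δ.map (liftTy 1 k)) A → P Δ (substTy A k G)) :
    ∀ {Γ' B}, Up0 P Γ' B → ∀ Δ k G, Γ' = Δ.map (liftTy 1 k) → Up0 P Δ (substTy B k G) := by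
  intro Γ' B h
  induction h with
  | base hp =>
    rintro Δ k G rfl
    exact Up0.base (hP _ _ _ _ hp)
  | allI h ih =>
    rintro Δ k G rfl
    have hc : (Δ.map (liftTy 1 k)).map (liftTy 1 0)
        = (Δ.map (liftTy 1 0)).map (liftTy 1 (k+1)) := by
      simp only [List.map_map]
      refine List.map_congr_left fun T _ => ?_
      show liftTy 1 0 (liftTy 1 k T) = liftTy 1 (k+1) (liftTy 1 0 T)
      exact liftTy_comm T 1 1 0 k (by omega)
    have := ih (Δ.map (liftTy 1 0)) (k+1) G hc
    exact Up0.allI this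

lemma up0_allE {P : List Ty → Ty → Prop}
    (hP : ∀ Δ k A G, P (Δ.map (liftTy 1 k)) A → P Δ (substTy A k G))
    (hnoall : ∀ Δ B, ¬ P Δ (.all B)) {Γ : List Ty} {B : Ty}
    (h : Up0 P Γ (.all B)) (G : Ty) : Up0 P Γ (substTy B 0 G) := by
  cases h with
  | base hp => exact absurd hp (hnoall _ _)
  | allI h' => exact up0_subst hP h' Γ 0 G rfl

lemma up_to_up0 {P : List Ty → Ty → Prop}
    (hP : ∀ Δ k A G, P (Δ.map (liftTy 1 k)) A → P Δ (substTy A k G))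
    (hnoall : ∀ Δ B, ¬ P Δ (.all B)) {Γ : List Ty} {A : Ty}
    (h : Up P Γ A) : Up0 P Γ A := by
  induction h with
  | base hp => exact Up0.base hp
  | allI _ ih => exact Up0.allI ih
  | allE G _ ih => exact up0_allE hP hnoall ih G

/-! ### Characterization of the types of head-variable terms -/

lemma chainH {P : List Ty → Ty → Prop} {t : Trm}
    (hbase : ∀ Δ A', CtxNeg Δ → P Δ A' →
      NegTy A' ∧ TypF0 Δ t A' ∧ ∃ (i : ℕ) (T : Ty), Δ[i]? = some T ∧ Tail A' T) :
    ∀ {Γ A}, Up P Γ A → CtxNeg Γ →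
      ∃ k C, A = Ty.all^[k] (liftTy k 0 C) ∧ NegTy C ∧ TypF0 Γ t C ∧
        ∃ (i : ℕ) (T : Ty), Γ[i]? = some T ∧ Tail C T := by
  intro Γ A h
  induction h with
  | base hp =>
    intro hΓ
    obtain ⟨h1, h2, h3⟩ := hbase _ _ hΓ hp
    exact ⟨0, _, by rw [Function.iterate_zero_apply, liftTy_zero], h1, h2, h3⟩
  | allI h ih =>
    intro hΓ
    obtain ⟨k, C, hA, hC, hT0, i, T', hget, htail⟩ := ih (ctxNeg_lift hΓ)
    rw [List.getElem?_map] at hget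
    obtain ⟨T, hT, rfl⟩ := Option.map_eq_some_iff.1 hget
    obtain ⟨C₀, rfl, htail₀⟩ := tail_lift htail
    refine ⟨k+1, C₀, ?_, (posTy_negTy_unlift C₀ 1 0).2 hC, typF0_unlift hT0, i, T, hT, htail₀⟩
    rw [Function.iterate_succ_apply', hA,
      liftTy_liftTy C₀ k 1 0 0 (by omega) (by omega)]
  | allE G h ih =>
    intro hΓ
    obtain ⟨k, C, hA, hC, hT0, hex⟩ := ih hΓ
    cases k with
    | zero =>
      rw [Function.iterate_zero_apply, liftTy_zero] at hA
      rw [← hA] at hC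
      exact absurd hC negTy_not_all
    | succ k' =>
      rw [Function.iterate_succ_apply'] at hA
      injection hA with hA
      refine ⟨k', C, ?_, hC, hT0, hex⟩
      rw [hA, substTy_iterate_all, Nat.zero_add,
        substTy_liftTy C (k'+1) 0 k' G (by omega) (by omega), Nat.add_sub_cancel]

/-! ### Normality facts -/

lemma isNormal_lam {u : Trm} (h : IsNormal (.lam u)) : IsNormal u :=
  fun w hw => h (.lam w) (BetaStep.lam hw)

lemma isNormal_app {u v : Trm} (h : IsNormal (.app u v)) :
    IsNormal u ∧ IsNormal v ∧ ∀ w, u ≠ .lam w := by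
  refine ⟨fun w hw => h _ (BetaStep.appL v hw),
    fun w hw => h _ (BetaStep.appR u hw), fun w hw => ?_⟩
  subst hw
  exact h _ (BetaStep.beta w v)

/-! ### The main induction -/

lemma npart_of_hpart {Γ : List Ty} {t : Trm} {A C : Ty} {k : ℕ}
    (hA : PosTy A) (heq : A = Ty.all^[k] (liftTy k 0 C)) (hT0 : TypF0 Γ t C) :
    TypF0 Γ t A := by
  cases k with
  | zero =>
    rw [Function.iterate_zero_apply, liftTy_zero] at heq
    rw [heq]
    exact hT0
  | succ k' =>
    exfalso
    rw [Function.iterate_succ_apply'] at heq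
    subst heq
    cases hA with
    | all _ hfree =>
      have := tyFreeIn_iterate k' 0 _ hfree
      rw [Nat.zero_add] at this
      exact not_tyFreeIn_lift C (k'+1) 0 k' (by omega) (by omega) this

lemma baseP_lam_stable (u : Trm) :
    ∀ Δ k A G, BaseP (.lam u) (Δ.map (liftTy 1 k)) A → BaseP (.lam u) Δ (substTy A k G) := by
  rintro Δ k A G ⟨B, C, rfl, hT⟩
  refine ⟨substTy B k G, substTy C k G, rfl, ?_⟩
  have h := typF_subst hT k G
  rw [show (B :: Δ.map (liftTy 1 k)).map (fun T => substTy T k G)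
      = substTy B k G :: (Δ.map (liftTy 1 k)).map (fun T => substTy T k G) from rfl,
    List.map_map] at h
  have hctx : Δ.map ((fun T => substTy T k G) ∘ liftTy 1 k) = Δ := by
    have heach : ∀ T ∈ Δ, ((fun T => substTy T k G) ∘ liftTy 1 k) T = id T := by
      intro T _
      show substTy (liftTy 1 k T) k G = T
      rw [substTy_liftTy T 1 k k G (by omega) (by omega), liftTy_zero]
    rw [List.map_congr_left heach, List.map_id]
  rw [hctx] at h
  exact h

lemma baseP_lam_noall (u : Trm) : ∀ Δ B, ¬ BaseP (.lam u) Δ (.all B) := by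
  rintro Δ B ⟨B', C', h, -⟩
  exact Ty.noConfusion h

lemma lam_chain {u : Trm}
    (IHu : ∀ Γ A, CtxNeg Γ → PosTy A → TypF Γ u A → TypF0 Γ u A) :
    ∀ {Γ A}, Up0 (BaseP (.lam u)) Γ A → CtxNeg Γ → PosTy A → TypF0 Γ (.lam u) A := by
  intro Γ A h
  induction h with
  | base hp =>
    intro hΓ hA
    obtain ⟨B, C, rfl, hT⟩ := hp
    cases hA with
    | arr hB hC =>
      refine TypF0.abs (IHu _ _ ?_ hC hT)
      intro T hT'
      rcases List.mem_cons.1 hT' with rfl | h'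
      · exact hB
      · exact hΓ T h'
  | allI h ih =>
    intro hΓ hA
    cases hA with
    | all hB _ => exact TypF0.allI (ih (ctxNeg_lift hΓ) hB)

lemma main_comb : ∀ t : Trm,
    (IsNormal t → ∀ Γ A, CtxNeg Γ → PosTy A → TypF Γ t A → TypF0 Γ t A) ∧
    (IsNormal t → (∀ w, t ≠ .lam w) → ∀ Γ A, CtxNeg Γ → TypF Γ t A →
      ∃ k C, A = Ty.all^[k] (liftTy k 0 C) ∧ NegTy C ∧ TypF0 Γ t C ∧
        ∃ (i : ℕ) (T : Ty), Γ[i]? = some T ∧ Tail C T) := by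
  intro t
  induction t with
  | var n =>
    have H : IsNormal (.var n) → (∀ w, (Trm.var n) ≠ .lam w) → ∀ Γ A, CtxNeg Γ →
        TypF Γ (.var n) A →
        ∃ k C, A = Ty.all^[k] (liftTy k 0 C) ∧ NegTy C ∧ TypF0 Γ (.var n) C ∧
          ∃ (i : ℕ) (T : Ty), Γ[i]? = some T ∧ Tail C T := by
      intro _ _ Γ A hΓ hF
      refine chainH ?_ (typF_up hF) hΓ
      intro Δ A' hΔ hp
      have hp' : Δ[n]? = some A' := hp
      have hmem : A' ∈ Δ := by
        have := List.getElem?_eq_some_iff.1 hp'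
        obtain ⟨hlt, hEq⟩ := this
        exact hEq ▸ List.getElem_mem _
      exact ⟨hΔ _ hmem, TypF0.var _ _ _ hp', n, A', hp', Tail.refl _⟩
    refine ⟨?_, H⟩
    intro hn Γ A hΓ hA hF
    obtain ⟨k, C, heq, -, hT0, -⟩ := H hn (fun w h => by cases h) Γ A hΓ hF
    exact npart_of_hpart hA heq hT0
  | app u v ihu ihv =>
    have H : IsNormal (.app u v) → (∀ w, (Trm.app u v) ≠ .lam w) → ∀ Γ A, CtxNeg Γ →
        TypF Γ (.app u v) A →
        ∃ k C, A = Ty.all^[k] (liftTy k 0 C) ∧ NegTy C ∧ TypF0 Γ (.app u v) C ∧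
          ∃ (i : ℕ) (T : Ty), Γ[i]? = some T ∧ Tail C T := by
      intro hn _ Γ A hΓ hF
      obtain ⟨hnu, hnv, hune⟩ := isNormal_app hn
      refine chainH ?_ (typF_up hF) hΓ
      intro Δ A' hΔ hp
      obtain ⟨B, hu, hv⟩ := hp
      obtain ⟨k, C, heq, hC, hT0, i, T, hg, htail⟩ := ihu.2 hnu hune Δ _ hΔ hu
      cases k with
      | succ k' =>
        rw [Function.iterate_succ_apply'] at heq
        exact Ty.noConfusion heq
      | zero =>
        rw [Function.iterate_zero_apply, liftTy_zero] at heq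
        rw [← heq] at hC hT0 htail
        cases hC with
        | arr hB hA' =>
          have hTv := ihv.1 hnv Δ B hΔ hB hv
          exact ⟨hA', TypF0.app hT0 hTv, i, T, hg,
            tail_trans (Tail.arrR (Tail.refl _)) htail⟩
    refine ⟨?_, H⟩
    intro hn Γ A hΓ hA hF
    obtain ⟨k, C, heq, -, hT0, -⟩ := H hn (fun w h => by cases h) Γ A hΓ hF
    exact npart_of_hpart hA heq hT0
  | lam u ihu =>
    constructor
    · intro hn Γ A hΓ hA hF
      have h0 := up_to_up0 (baseP_lam_stable u) (baseP_lam_noall u) (typF_up hF)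
      exact lam_chain (ihu.1 (isNormal_lam hn)) h0 hΓ hA
    · intro _ hne
      exact absurd rfl (hne u)

/-- a closed ∀⁺ type of system F is an input type : for every
normal term `t`, `⊢_F t : A` implies `⊢_{F₀} t : A`. -/
theorem pos_type_is_input_type (A : Ty) (hA : PosTy A) (hC : TyClosed A) :
    IsInputType A := by
  refine ⟨hC, fun t ht hF => ?_⟩
  exact (main_comb t).1 ht [] A (fun T h => absurd h List.not_mem_nil) hA hF

end FarkhNour
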